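/- (Tight-cover transformation; Lemma 3.2) Let V be a finite set, E a finite indexed family of subsets of V with ⋃_{e∈E} e = V, x = (x_e)_{e∈E} a fractional edge cover of (V,E), and R_e a finite relation on attribute set e for each e ∈ E. Then there exist a finite indexed family E′ of subsets of V, reals x′ = (x′_{e′})_{e′∈E′}, and finite relations R′_{e′} on attribute set e′ for e′ ∈ E′, such that: (a) x′ is a tight fractional cover, i.e. x′_{e′} ≥ 0 for all e′ ∈ E′ and ∑_{e′∈E′ : v∈e′} x′_{e′} = 1 for every v ∈ V; (b) each R′_{e′} is the projection π_{e′}(R_f) of some original relation R_f with e′ ⊆ f, and the natural joins coincide: {t : V → D | t|_{e} ∈ R_e ∀e ∈ E} = {t : V → D | t|_{e′} ∈ R′_{e′} ∀e′ ∈ E′}; (c) ∏_{e′∈E′} |R′_{e′}|^{x′_{e′}} ≤ ∏_{e∈E} |R_e|^{x_e}. -/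

import Mathlib

open Finset

section Aux
variable {α L : Type*} [DecidableEq α] [LinearOrder L]

/-- Weight increment used in the tight-cover construction: the difference
between `g v` and the largest value of `g` on elements of `B` strictly above
`v` in the `κ`-order (or `0` if there are none). -/
noncomputable def Fdiff (κ : α → L) (g : α → ℝ) (B : Finset α) (v : α) : ℝ :=
  g v - if h : (B.filter (fun u => κ v < κ u)).Nonempty
        then (B.filter (fun u => κ v < κ u)).sup' h g else 0

omit [DecidableEq α] in
lemma Fdiff_nonneg (κ : α → L) (g : α → ℝ) (hg0 : ∀ a, 0 ≤ g a)
    (hg : ∀ a b, κ a ≤ κ b → g b ≤ g a) (B : Finset α) (v : α) :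
    0 ≤ Fdiff κ g B v := by
  unfold Fdiff
  split_ifs with h
  · rw [sub_nonneg]
    exact Finset.sup'_le _ _ fun w hw => hg _ _ (le_of_lt (mem_filter.1 hw).2)
  · simpa using hg0 v

lemma Fdiff_telescope (κ : α → L) (hκ : Function.Injective κ)
    (g : α → ℝ) (hg : ∀ a b, κ a ≤ κ b → g b ≤ g a) (B : Finset α) :
    ∀ v ∈ B, ∑ w ∈ B.filter (fun w => κ v ≤ κ w), Fdiff κ g B w = g v := by
  have key : ∀ n : ℕ, ∀ v ∈ B, (B.filter (fun w => κ v ≤ κ w)).card ≤ n →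
      ∑ w ∈ B.filter (fun w => κ v ≤ κ w), Fdiff κ g B w = g v := by
    intro n
    induction n with
    | zero =>
      intro v hv hc
      exfalso
      have : v ∈ B.filter (fun w => κ v ≤ κ w) := mem_filter.2 ⟨hv, le_rfl⟩
      have := Finset.card_pos.2 ⟨v, this⟩
      omega
    | succ n ih =>
      intro v hv hc
      have hvC : v ∈ B.filter (fun w => κ v ≤ κ w) := mem_filter.2 ⟨hv, le_rfl⟩
      have hCA : (B.filter (fun w => κ v ≤ κ w)).erase v
          = B.filter (fun u => κ v < κ u) := by
        ext w
        simp only [mem_erase, mem_filter]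
        constructor
        · rintro ⟨hne, hwB, hle⟩
          exact ⟨hwB, lt_of_le_of_ne hle (fun hvw => hne (hκ hvw.symm))⟩
        · rintro ⟨hwB, hlt⟩
          exact ⟨fun hwv => absurd hlt (by simp [hwv]), hwB, le_of_lt hlt⟩
      rw [← Finset.add_sum_erase _ _ hvC, hCA]
      by_cases hAne : (B.filter (fun u => κ v < κ u)).Nonempty
      · obtain ⟨u, huA, hmin⟩ := Finset.exists_min_image _ κ hAne
        have huB : u ∈ B := (mem_filter.1 huA).1
        have hvu : κ v < κ u := (mem_filter.1 huA).2
        have hsup : (B.filter (fun u => κ v < κ u)).sup' hAne g = g u :=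
          le_antisymm (Finset.sup'_le _ _ fun w hw => hg _ _ (hmin w hw))
            (Finset.le_sup' g huA)
        have hfilt : B.filter (fun w => κ u ≤ κ w) = B.filter (fun u => κ v < κ u) := by
          ext w
          simp only [mem_filter, and_congr_right_iff]
          intro hwB
          exact ⟨fun h => lt_of_lt_of_le hvu h, fun h => hmin w (mem_filter.2 ⟨hwB, h⟩)⟩
        have hcard : (B.filter (fun w => κ u ≤ κ w)).card ≤ n := by
          rw [hfilt, ← hCA]
          have := Finset.card_erase_of_mem hvC
          omega
        have hsum := ih u huB hcard
        rw [hfilt] at hsum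
        rw [hsum]
        unfold Fdiff
        rw [dif_pos hAne, hsup]
        ring
      · rw [not_nonempty_iff_eq_empty.1 hAne, Finset.sum_empty]
        unfold Fdiff
        rw [dif_neg hAne]
        ring
  intro v hv
  exact key _ v hv le_rfl

lemma Fdiff_sum_le (κ : α → L) (hκ : Function.Injective κ)
    (g : α → ℝ) (hg1 : ∀ a, g a ≤ 1)
    (hg : ∀ a b, κ a ≤ κ b → g b ≤ g a) (B : Finset α) :
    ∑ v ∈ B, Fdiff κ g B v ≤ 1 := by
  rcases B.eq_empty_or_nonempty with h | h
  · simp [h]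
  · obtain ⟨v0, hv0, hmin⟩ := Finset.exists_min_image B κ h
    have hfull : B.filter (fun w => κ v0 ≤ κ w) = B :=
      Finset.filter_true_of_mem fun w hw => hmin w hw
    have := Fdiff_telescope κ hκ g hg B v0 hv0
    rw [hfull] at this
    rw [this]
    exact hg1 v0

end Aux

section Transport

/-- Transport a `J`-indexed construction to a `Fin k`-indexed one. -/
lemma transport_construction
    {V D : Type*} [Fintype V] [DecidableEq V] [DecidableEq D]
    {ι : Type*} [Fintype ι] (e : ι → Finset V)
    (x : ι → ℝ)
    (R : ∀ i, Finset ({v // v ∈ e i} → D))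
    {J : Type*} [Fintype J]
    (E : J → Finset V) (X : J → ℝ) (idx : J → ι)
    (hEsub : ∀ jJ, E jJ ⊆ e (idx jJ))
    (hX0 : ∀ jJ, 0 ≤ X jJ)
    (htight : ∀ v : V, ∑ jJ : J, (if v ∈ E jJ then X jJ else 0) = 1)
    (hjoin : {t : V → D | ∀ i, (fun v : {v // v ∈ e i} => t v) ∈ R i}
      = {t : V → D | ∀ jJ : J, (fun v : {v // v ∈ E jJ} => t v) ∈
          (R (idx jJ)).image (fun t (v : {v // v ∈ E jJ}) => t ⟨v.1, hEsub jJ v.2⟩)})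
    (hAGM : ∏ jJ : J, ((((R (idx jJ)).image
        (fun t (v : {v // v ∈ E jJ}) => t ⟨v.1, hEsub jJ v.2⟩)).card : ℝ)) ^ X jJ
      ≤ ∏ i, ((R i).card : ℝ) ^ x i) :
    ∃ (k : ℕ) (e' : Fin k → Finset V) (x' : Fin k → ℝ)
      (R' : ∀ j, Finset ({v // v ∈ e' j} → D)),
      (∀ j, 0 ≤ x' j) ∧
      (∀ v : V, ∑ j ∈ Finset.univ.filter (fun j => v ∈ e' j), x' j = 1) ∧
      (∀ j, ∃ (i : ι) (hsub : e' j ⊆ e i),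
        R' j = (R i).image (fun t => fun v : {v // v ∈ e' j} => t ⟨v.1, hsub v.2⟩)) ∧
      ({t : V → D | ∀ i, (fun v : {v // v ∈ e i} => t v) ∈ R i}
        = {t : V → D | ∀ j, (fun v : {v // v ∈ e' j} => t v) ∈ R' j}) ∧
      ∏ j, ((R' j).card : ℝ) ^ x' j ≤ ∏ i, ((R i).card : ℝ) ^ x i := by
  classical
  set τ : Fin (Fintype.card J) ≃ J := (Fintype.equivFin J).symm with hτ
  refine ⟨Fintype.card J, fun j => E (τ j), fun j => X (τ j),
    fun j => (R (idx (τ j))).image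
      (fun t (v : {v // v ∈ E (τ j)}) => t ⟨v.1, hEsub (τ j) v.2⟩),
    fun j => hX0 (τ j), ?_, fun j => ⟨idx (τ j), hEsub (τ j), rfl⟩, ?_, ?_⟩
  · intro v
    rw [Finset.sum_filter]
    rw [Fintype.sum_equiv τ _ (fun jJ => if v ∈ E jJ then X jJ else 0) (fun j => rfl)]
    exact htight v
  · rw [hjoin]
    ext t
    simp only [Set.mem_setOf_eq]
    constructor
    · intro h j; exact h (τ j)
    · intro h jJ
      obtain ⟨j, rfl⟩ := τ.surjective jJ
      exact h j
  · calc ∏ j, ((((R (idx (τ j))).image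
          (fun t (v : {v // v ∈ E (τ j)}) => t ⟨v.1, hEsub (τ j) v.2⟩)).card : ℝ)) ^ X (τ j)
        = ∏ jJ : J, ((((R (idx jJ)).image
          (fun t (v : {v // v ∈ E jJ}) => t ⟨v.1, hEsub jJ v.2⟩)).card : ℝ)) ^ X jJ :=
          Fintype.prod_equiv τ _ _ (fun j => rfl)
      _ ≤ ∏ i, ((R i).card : ℝ) ^ x i := hAGM

end Transport

/-- **Tight-cover transformation** (Lemma 3.2).
Given a hypergraph `(V, E)` (edges indexed by `ι`, covering `V`), a fractional
edge cover `x`, and finite relations `R i` on attribute sets `e i`, there is a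
finite family `e'` of subsets of `V` (indexed by `Fin k`), reals `x'`, and
finite relations `R'` such that: (a) `x'` is a tight fractional cover;
(b) each `R' j` is the projection `π_{e' j}(R i)` of some original relation with
`e' j ⊆ e i`, and the natural joins coincide; (c) the AGM bound does not
increase. -/
theorem tight_cover_transformation
    {V D : Type*} [Fintype V] [DecidableEq V] [DecidableEq D]
    {ι : Type*} [Fintype ι] (e : ι → Finset V)
    (hunion : ∀ v : V, ∃ i, v ∈ e i)
    (x : ι → ℝ) (hx0 : ∀ i, 0 ≤ x i)
    (hxcover : ∀ v : V, 1 ≤ ∑ i ∈ Finset.univ.filter (fun i => v ∈ e i), x i)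
    (R : ∀ i, Finset ({v // v ∈ e i} → D)) :
    ∃ (k : ℕ) (e' : Fin k → Finset V) (x' : Fin k → ℝ)
      (R' : ∀ j, Finset ({v // v ∈ e' j} → D)),
      -- (a) tight fractional cover
      (∀ j, 0 ≤ x' j) ∧
      (∀ v : V, ∑ j ∈ Finset.univ.filter (fun j => v ∈ e' j), x' j = 1) ∧
      -- (b) each new relation is a projection of an original one …
      (∀ j, ∃ (i : ι) (hsub : e' j ⊆ e i),
        R' j = (R i).image (fun t => fun v : {v // v ∈ e' j} => t ⟨v.1, hsub v.2⟩)) ∧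
      -- … and the natural joins coincide
      ({t : V → D | ∀ i, (fun v : {v // v ∈ e i} => t v) ∈ R i}
        = {t : V → D | ∀ j, (fun v : {v // v ∈ e' j} => t v) ∈ R' j}) ∧
      -- (c) the AGM bound does not increase
      ∏ j, ((R' j).card : ℝ) ^ x' j ≤ ∏ i, ((R i).card : ℝ) ^ x i := by
  classical
  by_cases hA : ∃ i, R i = ∅
  · -- some relation is empty: the join is empty and the AGM bound is `0 ≤ RHS`.
    obtain ⟨i0, hi0⟩ := hA
    refine transport_construction e x R
      (Sum.elim (fun v => {v}) (fun _ : Unit => (∅ : Finset V)))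
      (fun _ => 1)
      (Sum.elim (fun v => (hunion v).choose) (fun _ => i0))
      (fun jJ => by
        rcases jJ with v | u
        · simpa using (hunion v).choose_spec
        · exact Finset.empty_subset _)
      (fun _ => zero_le_one) ?_ ?_ ?_
    · intro v
      rw [Fintype.sum_sum_type]
      simp [Finset.mem_singleton, eq_comm]
    · have h1 : ∀ t : V → D, ¬ (∀ i, (fun v : {v // v ∈ e i} => t v) ∈ R i) := by
        intro t h
        have := h i0
        rw [hi0] at this
        exact Finset.notMem_empty _ this
      ext t
      simp only [Set.mem_setOf_eq]
      constructor
      · intro h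
        exact (h1 t h).elim
      · intro h
        exfalso
        have := h (Sum.inr ())
        simp only [Sum.elim_inr, hi0, Finset.image_empty] at this
        exact Finset.notMem_empty _ this
    · refine le_trans
        (le_of_eq (Finset.prod_eq_zero (Finset.mem_univ (Sum.inr ())) ?_))
        (Finset.prod_nonneg fun i _ => Real.rpow_nonneg (Nat.cast_nonneg _) _)
      simp [hi0, Real.rpow_one]
      exact Finset.image_empty _
  · -- all relations are nonempty: the genuine tight-cover construction.
    have hB : ∀ i, (R i).Nonempty := by
      push_neg at hA
      exact fun i => hA i
    set s : V → ℝ := fun v => ∑ i ∈ Finset.univ.filter (fun i => v ∈ e i), x i with hs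
    have hs1 : ∀ v, 1 ≤ s v := hxcover
    have hspos : ∀ v, 0 < s v := fun v => lt_of_lt_of_le one_pos (hs1 v)
    set nV : V ≃ Fin (Fintype.card V) := Fintype.equivFin V with hnV
    set κ : V → Lex (ℝ × ℕ) := fun v => toLex (s v, (nV v : ℕ)) with hκ
    have hκinj : Function.Injective κ := by
      intro a b h
      have h2 : (s a, (nV a : ℕ)) = (s b, (nV b : ℕ)) := by
        simpa [hκ] using h
      have : (nV a : ℕ) = (nV b : ℕ) := congrArg Prod.snd h2
      exact nV.injective (Fin.ext this)
    have hκs : ∀ a b, κ a ≤ κ b → s a ≤ s b := by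
      intro a b h
      rcases Prod.Lex.le_iff.1 h with h' | h'
      · exact le_of_lt h'
      · exact le_of_eq h'.1
    set g : V → ℝ := fun v => (s v)⁻¹ with hg
    have hg0 : ∀ v, 0 ≤ g v := fun v => inv_nonneg.2 (le_of_lt (hspos v))
    have hg1 : ∀ v, g v ≤ 1 := fun v => inv_le_one_of_one_le₀ (hs1 v)
    have hganti : ∀ a b, κ a ≤ κ b → g b ≤ g a := by
      intro a b h
      exact inv_anti₀ (hspos a) (hκs a b h)
    refine transport_construction e x R
      (Sum.elim (fun p : ι × V => (e p.1).filter (fun w => κ w ≤ κ p.2)) e)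
      (Sum.elim (fun p : ι × V => if p.2 ∈ e p.1 then x p.1 * Fdiff κ g (e p.1) p.2 else 0)
        (fun _ => 0))
      (Sum.elim Prod.fst id)
      (fun jJ => by
        rcases jJ with p | i
        · exact Finset.filter_subset _ _
        · exact subset_rfl)
      ?_ ?_ ?_ ?_
    · rintro (p | i)
      · simp only [Sum.elim_inl]
        split_ifs
        · exact mul_nonneg (hx0 _) (Fdiff_nonneg κ g hg0 hganti _ _)
        · exact le_rfl
      · exact le_rfl
    · intro v
      rw [Fintype.sum_sum_type, Fintype.sum_prod_type]
      simp only [Sum.elim_inl, Sum.elim_inr, ite_self, Finset.sum_const_zero, add_zero]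
      have h1 : ∀ i : ι, (∑ w : V,
          if v ∈ (e i).filter (fun u => κ u ≤ κ w)
          then (if w ∈ e i then x i * Fdiff κ g (e i) w else 0) else 0)
          = if v ∈ e i then x i * g v else 0 := by
        intro i
        by_cases hv : v ∈ e i
        · rw [if_pos hv]
          have hterm : ∀ w : V,
              (if v ∈ (e i).filter (fun u => κ u ≤ κ w)
               then (if w ∈ e i then x i * Fdiff κ g (e i) w else 0) else 0)
              = if w ∈ (e i).filter (fun u => κ v ≤ κ u)
                then x i * Fdiff κ g (e i) w else 0 := by
            intro w
            by_cases hw : w ∈ e i <;> by_cases hvw : κ v ≤ κ w <;>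
              simp [Finset.mem_filter, hv, hw, hvw]
          rw [Finset.sum_congr rfl (fun w _ => hterm w)]
          rw [Finset.sum_ite_mem, Finset.univ_inter, ← Finset.mul_sum,
            Fdiff_telescope κ hκinj g hganti (e i) v hv]
        · rw [if_neg hv]
          apply Finset.sum_eq_zero
          intro w _
          rw [if_neg]
          intro hmem
          exact hv (Finset.mem_filter.1 hmem).1
      rw [Finset.sum_congr rfl (fun i _ => h1 i)]
      have h3 : (∑ i : ι, if v ∈ e i then x i * g v else 0)
          = (∑ i ∈ Finset.univ.filter (fun i => v ∈ e i), x i) * g v := by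
        rw [Finset.sum_filter, Finset.sum_mul]
        exact Finset.sum_congr rfl fun i _ => by split_ifs <;> simp
      rw [h3]
      refine (add_eq_left.mpr (Finset.sum_eq_zero fun _ _ => ite_self _)).trans ?_
      exact mul_inv_cancel₀ (ne_of_gt (hspos v))
    · ext t
      simp only [Set.mem_setOf_eq]
      constructor
      · rintro h (p | i)
        · exact Finset.mem_image.2 ⟨_, h p.1, rfl⟩
        · exact Finset.mem_image.2 ⟨_, h i, rfl⟩
      · intro h i
        have hm := h (Sum.inr i)
        obtain ⟨a, ha, heq⟩ := Finset.mem_image.1 hm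
        have ha2 : a = fun v : {v // v ∈ e i} => t v.1 := heq
        exact ha2 ▸ ha
    · rw [Fintype.prod_sum_type, Fintype.prod_prod_type]
      simp only [Sum.elim_inl, Sum.elim_inr, Real.rpow_zero, Finset.prod_const_one, mul_one]
      apply Finset.prod_le_prod
      · intro i _
        exact Finset.prod_nonneg fun w _ => Real.rpow_nonneg (Nat.cast_nonneg _) _
      · intro i _
        have hb1 : (1:ℝ) ≤ ((R i).card : ℝ) := by
          exact_mod_cast Finset.card_pos.2 (hB i)
        have hbpos : (0:ℝ) < ((R i).card : ℝ) := lt_of_lt_of_le one_pos hb1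
        have hexp : ∀ w : V, 0 ≤ (if w ∈ e i then x i * Fdiff κ g (e i) w else 0) := by
          intro w
          split_ifs
          · exact mul_nonneg (hx0 _) (Fdiff_nonneg κ g hg0 hganti _ _)
          · exact le_rfl
        have step1 := Finset.prod_le_prod (s := Finset.univ)
          (f := fun w : V => ((((R i).image
              (fun t (v : {v // v ∈ (e i).filter (fun u => κ u ≤ κ w)}) =>
              t ⟨v.1, Finset.filter_subset _ _ v.2⟩)).card : ℝ)) ^
              (if w ∈ e i then x i * Fdiff κ g (e i) w else 0))
          (g := fun w : V => ((R i).card : ℝ) ^ (if w ∈ e i then x i * Fdiff κ g (e i) w else 0))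
          (fun w _ => Real.rpow_nonneg (Nat.cast_nonneg _) _)
          (fun w _ => Real.rpow_le_rpow (Nat.cast_nonneg _)
            (Nat.cast_le.2 Finset.card_image_le) (hexp w))
        refine le_trans step1 ?_
        rw [← Real.rpow_sum_of_pos hbpos _ Finset.univ]
        apply Real.rpow_le_rpow_of_exponent_le hb1
        rw [Finset.sum_ite_mem, Finset.univ_inter, ← Finset.mul_sum]
        calc x i * ∑ w ∈ e i, Fdiff κ g (e i) w
            ≤ x i * 1 := mul_le_mul_of_nonneg_left
              (Fdiff_sum_le κ hκinj g hg1 hganti (e i)) (hx0 i)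
          _ = x i := mul_one _
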